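/- arXiv:2408.17369 — 2 statements merged into one kernel-verified Lean document; each statement's English description precedes it below -/
import Mathlib

section
/- Let S be a set of n ≥ 3 points in the plane with distinct y-coordinates, in general position, and let C be a non-crossing monotone Hamiltonian cycle on S, consisting of two y-monotone paths L and R from the lowest point p_s to the highest point p_t, with L to the left of R. Then every point of S on the left envelope of the convex hull of S belongs to L, and every point of S on the right envelope belongs to R. -/
open scoped BigOperators

abbrev Pt : Type := ℝ × ℝ

noncomputable section

/-- Signed cross product: positive iff `b` is strictly left of the directed line `o → a`. -/
def xprod (o a b : Pt) : ℝ := (a.1 - o.1) * (b.2 - o.2) - (a.2 - o.2) * (b.1 - o.1)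

/-- Closed straight-line segment between two points. -/
def Seg (p q : Pt) : Set Pt := segment ℝ p q

/-- Consecutive edges of a polyline given by a list of points. -/
def edgesOf (l : List Pt) : List (Pt × Pt) := l.zip l.tail

/-- The set of points covered by a polyline. -/
def polyPts (l : List Pt) : Set Pt := ⋃ e ∈ edgesOf l, Seg e.1 e.2

/-- A polyline is y-monotone: strictly increasing y-coordinates. -/
def MonoPath (l : List Pt) : Prop := l.Chain' (fun p q => p.2 < q.2)

/-- Two segments do not cross: any common point is an endpoint of both. -/
def SegNC (e f : Pt × Pt) : Prop :=
  ∀ x : Pt, x ∈ Seg e.1 e.2 → x ∈ Seg f.1 f.2 →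
    (x = e.1 ∨ x = e.2) ∧ (x = f.1 ∨ x = f.2)

/-- No two distinct segments among the edges of the two polylines cross. -/
def PolyNC (L R : List Pt) : Prop :=
  ∀ e ∈ edgesOf L ++ edgesOf R, ∀ f ∈ edgesOf L ++ edgesOf R, e ≠ f → SegNC e f

/-- The polyline `L` is (weakly) to the left of `R` at every intermediate height. -/
def LeftOf (L R : List Pt) (ps pt : Pt) : Prop :=
  ∀ p ∈ polyPts L, ∀ q ∈ polyPts R, p.2 = q.2 → ps.2 < p.2 → p.2 < pt.2 → p.1 < q.1

/-- All points of `S` have pairwise distinct y-coordinates. -/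
def DistinctY (S : Finset Pt) : Prop := ∀ p ∈ S, ∀ q ∈ S, p.2 = q.2 → p = q

/-- General position: no three distinct points of `S` are collinear. -/
def GenPos (S : Finset Pt) : Prop :=
  ∀ p ∈ S, ∀ q ∈ S, ∀ r ∈ S, p ≠ q → p ≠ r → q ≠ r → xprod p q r ≠ 0

def IsLowest (S : Finset Pt) (p : Pt) : Prop := p ∈ S ∧ ∀ q ∈ S, q ≠ p → p.2 < q.2

def IsHighest (S : Finset Pt) (p : Pt) : Prop := p ∈ S ∧ ∀ q ∈ S, q ≠ p → q.2 < p.2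

/-- Points of `S` on the boundary of the convex hull of `S`. -/
def hullPts (S : Finset Pt) : Set Pt :=
  {p | p ∈ S ∧ p ∈ frontier (convexHull ℝ (S : Set Pt))}

/-- The left envelope: hull-boundary points of `S` on or to the left of the line `ps pt`. -/
def leftEnvelope (S : Finset Pt) (ps pt : Pt) : Set Pt :=
  {p ∈ hullPts S | 0 ≤ xprod ps pt p}

/-- The right envelope: hull-boundary points of `S` on or to the right of the line `ps pt`. -/
def rightEnvelope (S : Finset Pt) (ps pt : Pt) : Set Pt :=
  {p ∈ hullPts S | xprod ps pt p ≤ 0}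

/-- A non-crossing monotone Hamiltonian cycle on `S`, given by its two monotone
paths `L` and `R` from the lowest point `ps` to the highest point `pt`. -/
structure IsNCMonoHamCycle (S : Finset Pt) (ps pt : Pt) (L R : List Pt) : Prop where
  monoL : MonoPath L
  monoR : MonoPath R
  headL : L.head? = some ps
  headR : R.head? = some ps
  lastL : L.getLast? = some pt
  lastR : R.getLast? = some pt
  nodupL : L.Nodup
  nodupR : R.Nodup
  cover : ∀ p : Pt, p ∈ S ↔ (p ∈ L ∨ p ∈ R)
  shared : ∀ p : Pt, p ∈ L → p ∈ R → p = ps ∨ p = pt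
  noncross : PolyNC L R

/-- An upward planar straight-line embedding of the digraph `(V, E)` on the pointset `S`. -/
structure IsUPSE {V : Type} (E : V → V → Prop) (S : Finset Pt) (f : V → Pt) : Prop where
  bij : Set.BijOn f Set.univ (S : Set Pt)
  upward : ∀ u v : V, E u v → (f u).2 < (f v).2
  planar : ∀ u v w z : V, E u v → E w z → (u, v) ≠ (w, z) → SegNC (f u, f v) (f w, f z)

/-- Undirected reachability in a digraph. -/
def UReach {V : Type} (E : V → V → Prop) (a b : V) : Prop :=
  Relation.ReflTransGen (fun x y => E x y ∨ E y x) a b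

/-- The digraph `E` with the edges of `W` removed. -/
def AvoidW {V : Type} (E : V → V → Prop) (W : Set (V × V)) : V → V → Prop :=
  fun a b => E a b ∧ (a, b) ∉ W

/-- `W` is an st-cutset: removing `W` leaves exactly two undirected components,
one containing `s` and one containing `t`, and every edge of `W` goes from the
`s`-side to the `t`-side. -/
def IsSTCutset {V : Type} (E : V → V → Prop) (s t : V) (W : Set (V × V)) : Prop :=
  (∀ e ∈ W, E e.1 e.2) ∧
  (∀ v : V, UReach (AvoidW E W) s v ∨ UReach (AvoidW E W) t v) ∧
  ¬ UReach (AvoidW E W) s t ∧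
  (∀ e ∈ W, UReach (AvoidW E W) s e.1 ∧ UReach (AvoidW E W) t e.2)

/-- A bipath on `Si`: two non-crossing monotone paths starting at `p1`,
internally disjoint, together covering `Si`, with `L` to the left of `R`. -/
structure IsBipath (Si : Finset Pt) (p1 : Pt) (L R : List Pt) : Prop where
  monoL : MonoPath L
  monoR : MonoPath R
  headL : L.head? = some p1
  headR : R.head? = some p1
  nodupL : L.Nodup
  nodupR : R.Nodup
  cover : ∀ p : Pt, p ∈ Si ↔ (p ∈ L ∨ p ∈ R)
  shared : ∀ p : Pt, p ∈ L → p ∈ R → p = p1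
  noncross : PolyNC L R
  leftOf : ∀ p ∈ polyPts L, ∀ q ∈ polyPts R, p.2 = q.2 → p1.2 < p.2 → p ≠ q → p.1 < q.1

/-- The bipath `(L, R)` on `Si` extends to the non-crossing monotone Hamiltonian
cycle `(L', R')` on `S`, i.e. the restriction of the cycle to `Si` is `(L, R)`. -/
def ExtendsTo (S Si : Finset Pt) (ps pt : Pt) (L R L' R' : List Pt) : Prop :=
  IsNCMonoHamCycle S ps pt L' R' ∧
  L <+: L' ∧ R <+: R' ∧
  (∀ p ∈ L', p ∈ Si ↔ p ∈ L) ∧ (∀ p ∈ R', p ∈ Si ↔ p ∈ R)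

end

section Aux

lemma mem_polyPts_iff {l : List Pt} {x : Pt} :
    x ∈ polyPts l ↔ ∃ e ∈ edgesOf l, x ∈ Seg e.1 e.2 := by
  simp [polyPts]

lemma edgesOf_cons_cons (a b : Pt) (t : List Pt) :
    edgesOf (a :: b :: t) = (a, b) :: edgesOf (b :: t) := rfl

lemma polyPts_cons_subset (a : Pt) (l : List Pt) : polyPts l ⊆ polyPts (a :: l) := by
  intro z hz
  rw [mem_polyPts_iff] at hz ⊢
  obtain ⟨e, he, hze⟩ := hz
  cases l with
  | nil => simp [edgesOf] at he
  | cons b t =>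
      exact ⟨e, by rw [edgesOf_cons_cons]; exact List.mem_cons_of_mem _ he, hze⟩

lemma mem_polyPts (l : List Pt) (hl : 2 ≤ l.length) {x : Pt} (hx : x ∈ l) :
    x ∈ polyPts l := by
  induction l with
  | nil => simp at hx
  | cons a t ih =>
    cases t with
    | nil => simp at hl
    | cons b t' =>
      rcases List.mem_cons.1 hx with h | hx'
      · subst h
        exact mem_polyPts_iff.2 ⟨(x, b), by simp [edgesOf_cons_cons],
          left_mem_segment ℝ x b⟩
      · cases t' with
        | nil =>
          have hb : x = b := by simpa using hx'
          subst hb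
          exact mem_polyPts_iff.2 ⟨(a, x), by simp [edgesOf_cons_cons],
            right_mem_segment ℝ a x⟩
        | cons c t'' =>
          exact polyPts_cons_subset a _ (ih (by simp) hx')

lemma polyPts_subset_of_convex {l : List Pt} {K : Set Pt} (hK : Convex ℝ K)
    (h : ∀ x ∈ l, x ∈ K) : polyPts l ⊆ K := by
  intro z hz
  rw [mem_polyPts_iff] at hz
  obtain ⟨e, he, hze⟩ := hz
  have h1 : e.1 ∈ l := (List.of_mem_zip he).1
  have h2 : e.2 ∈ l := List.tail_subset l (List.of_mem_zip he).2
  exact hK.segment_subset (h _ h1) (h _ h2) hze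

lemma exists_at_height (l : List Pt) (hm : MonoPath l) (a b : Pt)
    (ha : l.head? = some a) (hb : l.getLast? = some b) (h : ℝ)
    (hah : a.2 ≤ h) (hhb : h ≤ b.2) (hab : a.2 < b.2) :
    ∃ q ∈ polyPts l, q.2 = h := by
  induction l generalizing a with
  | nil => simp at ha
  | cons x t ih =>
    have hax : a = x := by simpa using ha.symm
    subst hax
    cases t with
    | nil =>
      have : b = a := by simpa using hb.symm
      subst this
      exact absurd hab (lt_irrefl _)
    | cons y t' =>
      by_cases hy : h ≤ y.2
      · have hxy : a.2 < y.2 := (List.isChain_cons_cons.1 hm).1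
        have hd : (0:ℝ) < y.2 - a.2 := by linarith
        set s : ℝ := (h - a.2) / (y.2 - a.2) with hs
        have hs0 : 0 ≤ s := div_nonneg (by linarith) hd.le
        have hs1 : s ≤ 1 := (div_le_one hd).2 (by linarith)
        refine ⟨(1 - s) • a + s • y, ?_, ?_⟩
        · exact mem_polyPts_iff.2 ⟨(a, y), by simp [edgesOf_cons_cons],
            ⟨1 - s, s, by linarith, hs0, by ring, rfl⟩⟩
        · have hmul : s * (y.2 - a.2) = h - a.2 := div_mul_cancel₀ _ hd.ne'
          have : ((1 - s) • a + s • y).2 = (1 - s) * a.2 + s * y.2 := rfl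
          rw [this]; nlinarith [hmul]
      · push_neg at hy
        have hb' : (y :: t').getLast? = some b := by
          rwa [List.getLast?_cons_cons] at hb
        obtain ⟨q, hq, hq2⟩ := ih hm.tail y rfl hb' hy.le (lt_of_lt_of_le hy hhb)
        exact ⟨q, polyPts_cons_subset a _ hq, hq2⟩

lemma head?_mem {l : List Pt} {a : Pt} (h : l.head? = some a) : a ∈ l := by
  cases l with
  | nil => simp at h
  | cons x t =>
    have hax : a = x := by simpa using h.symm
    rw [hax]
    exact List.mem_cons_self

lemma getLast?_mem {l : List Pt} {a : Pt} (h : l.getLast? = some a) : a ∈ l := by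
  cases l with
  | nil => simp at h
  | cons x t =>
    have : (x :: t).getLast (by simp) = a := by
      rwa [List.getLast?_eq_getLast (by simp), Option.some_inj] at h
    exact this ▸ List.getLast_mem _

lemma length_two_of_head_last {l : List Pt} {a b : Pt}
    (ha : l.head? = some a) (hb : l.getLast? = some b) (hab : a ≠ b) :
    2 ≤ l.length := by
  cases l with
  | nil => simp at ha
  | cons x t =>
    cases t with
    | nil =>
      exfalso
      apply hab
      have h1 : a = x := by simpa using ha.symm
      have h2 : b = x := by simpa using hb.symm
      rw [h1, h2]
    | cons y t' => simp

/-- Barycentric-coordinate criterion for interior membership in a convex set. -/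
lemma tri_interior {K : Set Pt} (hK : Convex ℝ K) {u v w p : Pt}
    (hu : u ∈ K) (hv : v ∈ K) (hw : w ∈ K)
    (h1 : 0 < xprod v w p * xprod u v w)
    (h2 : 0 < xprod w u p * xprod u v w)
    (h3 : 0 < xprod u v p * xprod u v w) :
    p ∈ interior K := by
  set D := xprod u v w with hD
  have hDne : D ≠ 0 := by
    intro h; rw [h, mul_zero] at h1; exact lt_irrefl _ h1
  have hD2 : (0:ℝ) < D ^ 2 := by positivity
  have hsum : ∀ z : Pt, xprod v w z + xprod w u z + xprod u v z = D := by
    intro z; simp only [xprod, hD]; ring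
  have hcomb1 : ∀ z : Pt,
      xprod v w z * u.1 + xprod w u z * v.1 + xprod u v z * w.1 = D * z.1 := by
    intro z; simp only [xprod, hD]; ring
  have hcomb2 : ∀ z : Pt,
      xprod v w z * u.2 + xprod w u z * v.2 + xprod u v z * w.2 = D * z.2 := by
    intro z; simp only [xprod, hD]; ring
  have hUopen : IsOpen ({z : Pt | 0 < xprod v w z * D} ∩
      ({z : Pt | 0 < xprod w u z * D} ∩ {z : Pt | 0 < xprod u v z * D})) := by
    have hc : ∀ a b : Pt, Continuous fun z : Pt => xprod a b z * D := by
      intro a b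
      simp only [xprod]
      fun_prop
    exact ((isOpen_lt continuous_const (hc v w)).inter
      ((isOpen_lt continuous_const (hc w u)).inter
        (isOpen_lt continuous_const (hc u v))))
  refine mem_interior.2 ⟨_, ?_, hUopen, ⟨h1, h2, h3⟩⟩
  intro z hz
  obtain ⟨hz1, hz2, hz3⟩ := hz
  set A := xprod v w z / D with hA
  set B := xprod w u z / D with hB
  set C := xprod u v z / D with hC
  have hApos : 0 < A := by
    have : A = xprod v w z * D / D ^ 2 := by rw [hA]; field_simp
    rw [this]; exact div_pos hz1 hD2
  have hBpos : 0 < B := by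
    have : B = xprod w u z * D / D ^ 2 := by rw [hB]; field_simp
    rw [this]; exact div_pos hz2 hD2
  have hCpos : 0 < C := by
    have : C = xprod u v z * D / D ^ 2 := by rw [hC]; field_simp
    rw [this]; exact div_pos hz3 hD2
  have hABC : A + B + C = 1 := by
    rw [hA, hB, hC, ← add_div, ← add_div, hsum z, div_self hDne]
  have hcombo : A • u + B • v + C • w = z := by
    have e1 : (A • u + B • v + C • w).1 = A * u.1 + B * v.1 + C * w.1 := rfl
    have e2 : (A • u + B • v + C • w).2 = A * u.2 + B * v.2 + C * w.2 := rfl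
    have hx : A * u.1 + B * v.1 + C * w.1 = z.1 := by
      rw [hA, hB, hC]
      field_simp
      linarith [hcomb1 z]
    have hy : A * u.2 + B * v.2 + C * w.2 = z.2 := by
      rw [hA, hB, hC]
      field_simp
      linarith [hcomb2 z]
    exact Prod.ext (by rw [e1, hx]) (by rw [e2, hy])
  have hBC : (0:ℝ) < B + C := by linarith
  have hmid : (B / (B + C)) • v + (C / (B + C)) • w ∈ K :=
    hK hv hw (div_nonneg hBpos.le hBC.le) (div_nonneg hCpos.le hBC.le)
      (by field_simp)
  have hfin := hK hu hmid hApos.le hBC.le (by linarith)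
  have : A • u + (B + C) • ((B / (B + C)) • v + (C / (B + C)) • w)
      = A • u + B • v + C • w := by
    rw [smul_add, smul_smul, smul_smul, mul_div_cancel₀ _ hBC.ne',
      mul_div_cancel₀ _ hBC.ne', add_assoc]
  rw [this, hcombo] at hfin
  exact hfin

lemma aux_interior {K : Set Pt} (hK : Convex ℝ K) {ps pt q p : Pt}
    (hps : ps ∈ K) (hpt : pt ∈ K) (hq : q ∈ K)
    (hq2 : q.2 = p.2) (h1 : ps.2 < p.2) (h2 : p.2 < pt.2)
    (hsign : 0 < xprod ps pt p * (p.1 - q.1)) :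
    p ∈ interior K := by
  obtain ⟨qx, qy⟩ := q
  simp only at hq2
  subst hq2
  set X := xprod ps pt p with hX
  set d := p.1 - qx with hd
  have hT : (0:ℝ) < pt.2 - ps.2 := by linarith
  have hDq : xprod (qx, p.2) ps pt = X + (pt.2 - ps.2) * d := by
    simp only [hX, hd, xprod]; ring
  have hg1 : xprod pt (qx, p.2) p = (pt.2 - p.2) * d := by
    simp only [hd, xprod]; ring
  have hg2 : xprod (qx, p.2) ps p = (p.2 - ps.2) * d := by
    simp only [hd, xprod]; ring
  have hdD : 0 < d * (X + (pt.2 - ps.2) * d) := by nlinarith [sq_nonneg d]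
  apply tri_interior hK hq hps hpt
  · rw [hDq]; nlinarith [sq_nonneg X]
  · rw [hg1, hDq]; nlinarith
  · rw [hg2, hDq]; nlinarith

end Aux

/-- in a non-crossing monotone Hamiltonian cycle with `L` to the
left of `R`, the left envelope is contained in `L` and the right envelope in `R`. -/
theorem stmt_1 (S : Finset Pt) (hcard : 3 ≤ S.card)
    (hy : DistinctY S) (hgp : GenPos S)
    (ps pt : Pt) (hs : IsLowest S ps) (ht : IsHighest S pt)
    (L R : List Pt) (hC : IsNCMonoHamCycle S ps pt L R) (hLR : LeftOf L R ps pt) :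
    (∀ p ∈ leftEnvelope S ps pt, p ∈ L) ∧ (∀ p ∈ rightEnvelope S ps pt, p ∈ R) := by
  have hpsS := hs.1
  have hptS := ht.1
  -- there is a third point
  have hr : ∃ r ∈ S, r ≠ ps ∧ r ≠ pt := by
    by_contra hcon
    push_neg at hcon
    have hsub : S ⊆ {ps, pt} := by
      intro x hx
      rcases eq_or_ne x ps with rfl | hx1
      · simp
      rcases eq_or_ne x pt with rfl | hx2
      · simp
      exact absurd hx2 (fun h => h ((hcon x hx hx1)))
    have := Finset.card_le_card hsub
    have h2 : ({ps, pt} : Finset Pt).card ≤ 2 := Finset.card_insert_le _ _ |>.trans (by simp)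
    omega
  obtain ⟨r, hrS, hrps, hrpt⟩ := hr
  have hspt : ps.2 < pt.2 := lt_trans (hs.2 r hrS hrps) (ht.2 r hrS hrpt)
  have hpsne : ps ≠ pt := fun h => by rw [h] at hspt; exact lt_irrefl _ hspt
  have hLlen : 2 ≤ L.length := length_two_of_head_last hC.headL hC.lastL hpsne
  have hRlen : 2 ≤ R.length := length_two_of_head_last hC.headR hC.lastR hpsne
  have hpsL : ps ∈ L := head?_mem hC.headL
  have hptL : pt ∈ L := getLast?_mem hC.lastL
  have hpsR : ps ∈ R := head?_mem hC.headR
  have hptR : pt ∈ R := getLast?_mem hC.lastR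
  have hLS : ∀ x ∈ L, x ∈ S := fun x hx => (hC.cover x).2 (Or.inl hx)
  have hRS : ∀ x ∈ R, x ∈ S := fun x hx => (hC.cover x).2 (Or.inr hx)
  have hK : Convex ℝ (convexHull ℝ (S : Set Pt)) := convex_convexHull ℝ _
  have hsub : (S : Set Pt) ⊆ convexHull ℝ (S : Set Pt) := subset_convexHull ℝ _
  constructor
  · intro p hp
    by_contra hpL
    have hpS : p ∈ S := hp.1.1
    have hpR : p ∈ R := ((hC.cover p).1 hpS).resolve_left hpL
    have hpps : p ≠ ps := fun h => hpL (h ▸ hpsL)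
    have hppt : p ≠ pt := fun h => hpL (h ▸ hptL)
    have h1 : ps.2 < p.2 := hs.2 p hpS hpps
    have h2 : p.2 < pt.2 := ht.2 p hpS hppt
    obtain ⟨q, hqL, hq2⟩ := exists_at_height L hC.monoL ps pt hC.headL hC.lastL
      p.2 h1.le h2.le hspt
    have hqhull : q ∈ convexHull ℝ (S : Set Pt) :=
      polyPts_subset_of_convex hK (fun x hx => hsub (hLS x hx)) hqL
    have hppoly : p ∈ polyPts R := mem_polyPts R hRlen hpR
    have hlt : q.1 < p.1 := hLR q hqL p hppoly hq2
      (by rw [hq2]; exact h1) (by rw [hq2]; exact h2)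
    have hxne : xprod ps pt p ≠ 0 :=
      hgp ps hpsS pt hptS p hpS hpsne (Ne.symm hpps) (Ne.symm hppt)
    have hxpos : 0 < xprod ps pt p := lt_of_le_of_ne hp.2 (Ne.symm hxne)
    have hint : p ∈ interior (convexHull ℝ (S : Set Pt)) :=
      aux_interior hK (hsub hpsS) (hsub hptS) hqhull hq2 h1 h2
        (mul_pos hxpos (by linarith))
    exact hp.1.2.2 hint
  · intro p hp
    by_contra hpR
    have hpS : p ∈ S := hp.1.1
    have hpL : p ∈ L := ((hC.cover p).1 hpS).resolve_right hpR
    have hpps : p ≠ ps := fun h => hpR (h ▸ hpsR)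
    have hppt : p ≠ pt := fun h => hpR (h ▸ hptR)
    have h1 : ps.2 < p.2 := hs.2 p hpS hpps
    have h2 : p.2 < pt.2 := ht.2 p hpS hppt
    obtain ⟨q, hqR, hq2⟩ := exists_at_height R hC.monoR ps pt hC.headR hC.lastR
      p.2 h1.le h2.le hspt
    have hqhull : q ∈ convexHull ℝ (S : Set Pt) :=
      polyPts_subset_of_convex hK (fun x hx => hsub (hRS x hx)) hqR
    have hppoly : p ∈ polyPts L := mem_polyPts L hLlen hpL
    have hlt : p.1 < q.1 := hLR p hppoly q hqR hq2.symm h1 h2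
    have hxne : xprod ps pt p ≠ 0 :=
      hgp ps hpsS pt hptS p hpS hpsne (Ne.symm hpps) (Ne.symm hppt)
    have hxneg : xprod ps pt p < 0 := lt_of_le_of_ne hp.2 hxne
    have hint : p ∈ interior (convexHull ℝ (S : Set Pt)) :=
      aux_interior hK (hsub hpsS) (hsub hptS) hqhull hq2 h1 h2
        (mul_pos_of_neg_of_neg hxneg (by linarith))
    exact hp.1.2.2 hint
end

section
/- Let G be a planar st-graph (a finite acyclic digraph with unique source s and unique sink t), let W be an st-cutset of G defining components C_s (containing s) and C_t (containing t), let v be a vertex that is the tail of at least one edge of W, such that every edge of G outgoing from v belongs to W. Let H be the set obtained from W by removing all edges with tail v and adding all edges of G with head v. Then H is also an st-cutset of G. -/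
open scoped BigOperators

/-- replacing, in an st-cutset `W`, the edges outgoing from a
suitable vertex `v` by the edges incoming into `v` yields another st-cutset. -/
theorem stmt_2 {V : Type} [Fintype V] (E : V → V → Prop) (s t : V)
    (hacyc : ∀ v : V, ¬ Relation.TransGen E v v)
    (hsrc : ∀ v : V, (∀ u, ¬ E u v) → v = s)
    (hsink : ∀ v : V, (∀ u, ¬ E v u) → v = t)
    (W : Set (V × V)) (hW : IsSTCutset E s t W)
    (v : V) (hvs : v ≠ s)
    (hvtail : ∃ e ∈ W, e.1 = v)
    (hout : ∀ u : V, E v u → (v, u) ∈ W)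
    (hin : ∀ u : V, E u v → UReach (AvoidW E W) s u) :
    IsSTCutset E s t ((W \ {e : V × V | e.1 = v}) ∪ {e : V × V | E e.1 e.2 ∧ e.2 = v}) := by
  classical
  obtain ⟨e₀, he₀W, he₀v⟩ := hvtail
  obtain ⟨hW1, hW2, hW3, hW4⟩ := hW
  set W' : Set (V × V) :=
    (W \ {e : V × V | e.1 = v}) ∪ {e : V × V | E e.1 e.2 ∧ e.2 = v} with hW'def
  have usymm : ∀ (Q : Set (V × V)) (a b : V),
      UReach (AvoidW E Q) a b → UReach (AvoidW E Q) b a := by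
    intro Q a b h
    exact (@Relation.ReflTransGen.symmetric _ _ ⟨fun x y hxy => hxy.symm⟩).symm _ _ h
  have hsv : UReach (AvoidW E W) s v := by
    have := (hW4 e₀ he₀W).1
    rwa [he₀v] at this
  have hnotv : ∀ x, UReach (AvoidW E W) t x → x ≠ v := by
    intro x hx hxv
    exact hW3 (hsv.trans (usymm W t v (hxv ▸ hx)))
  -- transfer of edges not incident to v
  have htrans : ∀ a b : V, a ≠ v → b ≠ v → AvoidW E W a b → AvoidW E W' a b := by
    rintro a b ha hb ⟨hE, hnW⟩
    refine ⟨hE, ?_⟩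
    rintro (⟨hmem, -⟩ | ⟨-, h2⟩)
    · exact hnW hmem
    · exact hb h2
  -- Lemma B : t-reachability transfers
  have lemB : ∀ x, UReach (AvoidW E W) t x → UReach (AvoidW E W') t x := by
    intro x hx
    induction hx with
    | refl => exact Relation.ReflTransGen.refl
    | @tail b c h1 h2 ih =>
      have hb : b ≠ v := hnotv b h1
      have hc : c ≠ v := hnotv c (h1.tail h2)
      rcases h2 with h | h
      · exact ih.tail (Or.inl (htrans b c hb hc h))
      · exact ih.tail (Or.inr (htrans c b hc hb h))
  -- Lemma A : s-reachability transfers for x ≠ v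
  have lemA : ∀ x, x ≠ v → UReach (AvoidW E W) s x → UReach (AvoidW E W') s x := by
    by_contra h
    push_neg at h
    obtain ⟨x₀, hx₀v, hx₀s, hx₀s'⟩ := h
    set P : Set V :=
      {x | UReach (AvoidW E W) s x ∧ ¬ UReach (AvoidW E W') s x ∧ x ≠ v} with hPdef
    have hx₀ : x₀ ∈ P := ⟨hx₀s, hx₀s', hx₀v⟩
    have key : ∀ x, ∃ u, x ∈ P → u ∈ P ∧ E u x := by
      intro x
      by_cases hx : x ∈ P
      · obtain ⟨hsx, hs'x, hxv⟩ := hx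
        have hxs : x ≠ s := by
          intro h
          exact hs'x (h ▸ Relation.ReflTransGen.refl)
        have hex : ∃ u, E u x := by
          by_contra hno
          push_neg at hno
          exact hxs (hsrc x hno)
        obtain ⟨u, hux⟩ := hex
        have hnW : (u, x) ∉ W := by
          intro hmem
          exact hW3 (hsx.trans (usymm W t x (hW4 _ hmem).2))
        have huv : u ≠ v := by
          intro h
          exact hnW (h ▸ hout x (h ▸ hux))
        have hsu : UReach (AvoidW E W) s u := hsx.tail (Or.inr ⟨hux, hnW⟩)
        have hs'u : ¬ UReach (AvoidW E W') s u := by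
          intro hs'u
          exact hs'x (hs'u.tail (Or.inl (htrans u x huv hxv ⟨hux, hnW⟩)))
        exact ⟨u, fun _ => ⟨⟨hsu, hs'u, huv⟩, hux⟩⟩
      · exact ⟨x, fun h => absurd h hx⟩
    choose f hf using key
    set g : ℕ → V := fun n => f^[n] x₀ with hgdef
    have hg : ∀ n, g n ∈ P := by
      intro n
      induction n with
      | zero => exact hx₀
      | succ n ih =>
        have : g (n+1) = f (g n) := Function.iterate_succ_apply' f n x₀
        rw [this]
        exact (hf (g n) ih).1
    have hgE : ∀ n, E (g (n+1)) (g n) := by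
      intro n
      have : g (n+1) = f (g n) := Function.iterate_succ_apply' f n x₀
      rw [this]
      exact (hf (g n) (hg n)).2
    have hchain : ∀ i j, i < j → Relation.TransGen E (g j) (g i) := by
      intro i j
      induction j with
      | zero => omega
      | succ j ih =>
        intro hij
        rcases Nat.lt_succ_iff_lt_or_eq.mp hij with h | h
        · exact (ih h).head (hgE j)
        · subst h
          exact Relation.TransGen.single (hgE _)
    obtain ⟨i, j, hij, heq⟩ := Finite.exists_ne_map_eq_of_infinite g
    rcases hij.lt_or_gt with h | h
    · exact hacyc (g i) (heq ▸ hchain i j h)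
    · exact hacyc (g j) (heq ▸ hchain j i h)
  -- v is t-reachable in W'
  have htv : UReach (AvoidW E W') t v := by
    have hEvw : E v e₀.2 := by
      have := hW1 e₀ he₀W
      rwa [he₀v] at this
    have hwv : e₀.2 ≠ v := by
      intro h
      exact hacyc v (Relation.TransGen.single (h ▸ hEvw))
    have hnW' : (v, e₀.2) ∉ W' := by
      rintro (⟨-, h⟩ | ⟨-, h⟩)
      · exact h rfl
      · exact hwv h
    exact (lemB e₀.2 (hW4 e₀ he₀W).2).tail (Or.inr ⟨hEvw, hnW'⟩)
  -- Lemma C : s-reachability in W' implies s-reachability in W, and ≠ v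
  have lemC : ∀ x, UReach (AvoidW E W') s x →
      UReach (AvoidW E W) s x ∧ x ≠ v := by
    intro x hx
    induction hx with
    | refl => exact ⟨Relation.ReflTransGen.refl, fun h => hvs h.symm⟩
    | @tail b c h1 h2 ih =>
      obtain ⟨hsb, hbv⟩ := ih
      rcases h2 with ⟨hE, hn⟩ | ⟨hE, hn⟩
      · have hcv : c ≠ v := by
          intro h
          exact hn (Or.inr ⟨hE, h⟩)
        have hnW : (b, c) ∉ W := by
          intro h
          exact hn (Or.inl ⟨h, fun hh => hbv hh⟩)
        exact ⟨hsb.tail (Or.inl ⟨hE, hnW⟩), hcv⟩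
      · by_cases hcv : c = v
        · subst hcv
          exact absurd (hsb.trans (usymm W t b (hW4 _ (hout b hE)).2)) hW3
        · have hnW : (c, b) ∉ W := by
            intro h
            exact hn (Or.inl ⟨h, fun hh => hcv hh⟩)
          exact ⟨hsb.tail (Or.inr ⟨hE, hnW⟩), hcv⟩
  refine ⟨?_, ?_, ?_, ?_⟩
  · rintro ⟨a, b⟩ (⟨h, -⟩ | ⟨h, -⟩)
    · exact hW1 _ h
    · exact h
  · intro x
    rcases hW2 x with h | h
    · by_cases hxv : x = v
      · exact Or.inr (hxv ▸ htv)
      · exact Or.inl (lemA x hxv h)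
    · exact Or.inr (lemB x h)
  · intro h
    exact hW3 (lemC t h).1
  · rintro ⟨a, b⟩ (⟨hmem, hna⟩ | ⟨hE, hb⟩)
    · exact ⟨lemA a hna (hW4 _ hmem).1, lemB b (hW4 _ hmem).2⟩
    · have hEav : E a v := hb ▸ hE
      have hav : a ≠ v := by
        intro h
        exact hacyc v (Relation.TransGen.single (h ▸ hEav))
      exact ⟨lemA a hav (hin a hEav), hb ▸ htv⟩
end
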